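/- arXiv:1408.0528 — 3 statements merged into one kernel-verified Lean document; each statement's English description precedes it below -/
import Mathlib

section
/- Reduction of regular path queries to reachability (graph form of the paper's intersection lemma): for every edge-labeled directed graph (V, E) over Γ, every DFA M over Γ, and all vertices u, v, there exists a word w accepted by M together with a w-labeled path from u to v in (V, E) if and only if there exists an accepting state q_f ∈ M.accept such that (v, q_f) is reachable from (u, M.start) in the product graph of (V, E) with M. -/
/-- A `w`-labeled path from `u` to `v` in an edge-labeled directed graph
with edge relation `E : V → Γ → V → Prop`. -/
inductive LabeledPath {V Γ : Type*} (E : V → Γ → V → Prop) : V → List Γ → V → Prop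
  | nil (u : V) : LabeledPath E u [] u
  | cons {u x v : V} {a : Γ} {w : List Γ} (h : E u a x) (p : LabeledPath E x w v) :
      LabeledPath E u (a :: w) v

/-- The edge relation of the product graph of an edge-labeled directed graph
with a DFA: there is an edge from `(u, q)` to `(v, q')` iff there is a letter `a`
with `E u a v` and `M.step q a = q'`. -/
def ProdEdge {V Γ σ : Type*} (E : V → Γ → V → Prop) (M : DFA Γ σ) :
    V × σ → V × σ → Prop :=
  fun p p' => ∃ a : Γ, E p.1 a p'.1 ∧ M.step p.2 a = p'.2

lemma path_to_reach {V Γ σ : Type*} (E : V → Γ → V → Prop) (M : DFA Γ σ)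
    {u v : V} {w : List Γ} (p : LabeledPath E u w v) (q : σ) :
    Relation.ReflTransGen (ProdEdge E M) (u, q) (v, M.evalFrom q w) := by
  induction p generalizing q with
  | nil u => exact .refl
  | cons h p ih =>
      exact Relation.ReflTransGen.head ⟨_, h, rfl⟩ (ih _)

lemma reach_to_path {V Γ σ : Type*} (E : V → Γ → V → Prop) (M : DFA Γ σ)
    {p p' : V × σ} (h : Relation.ReflTransGen (ProdEdge E M) p p') :
    ∃ w : List Γ, LabeledPath E p.1 w p'.1 ∧ M.evalFrom p.2 w = p'.2 := by
  induction h using Relation.ReflTransGen.head_induction_on with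
  | refl => exact ⟨[], LabeledPath.nil _, rfl⟩
  | head e _ ih =>
      obtain ⟨a, hE, hs⟩ := e
      obtain ⟨w, hp, hw⟩ := ih
      exact ⟨a :: w, LabeledPath.cons hE hp, by simp [DFA.evalFrom, hs, ← hw]⟩

theorem regularPathQuery_iff_reachability {V Γ σ : Type*}
    (E : V → Γ → V → Prop) (M : DFA Γ σ) (u v : V) :
    (∃ w : List Γ, w ∈ M.accepts ∧ LabeledPath E u w v) ↔
      ∃ qf ∈ M.accept,
        Relation.ReflTransGen (ProdEdge E M) (u, M.start) (v, qf) := by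
  constructor
  · rintro ⟨w, hw, hp⟩
    exact ⟨M.evalFrom M.start w, hw, path_to_reach E M hp M.start⟩
  · rintro ⟨qf, hqf, hr⟩
    obtain ⟨w, hp, hw⟩ := reach_to_path E M hr
    exact ⟨w, by rw [DFA.mem_accepts, DFA.eval]; simp at hw; rw [hw]; exact hqf, hp⟩
end

section
/- Unsafe state pairs of the minimal DFA transfer to every equivalent DFA (core of the paper's lemma that a query is safe iff its minimal DFA is safe): let M and M' be DFAs over Γ accepting the same language, such that every state of M' is reachable from M'.start and distinct states of M' have distinct right languages. Suppose q1', q2' are states of M' and W1, W2 ⊆ List Γ are sets of words such that some w ∈ W1 satisfies M'.evalFrom q1' w = q2', while no w' ∈ W2 satisfies M'.evalFrom q1' w' = q2'. Then there exist states q1 and q2 of M, equivalent to q1' and q2' respectively, such that some w ∈ W1 satisfies M.evalFrom q1 w = q2 and no w' ∈ W2 satisfies M.evalFrom q1 w' = q2. -/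
/-- The right language of a state `q` of a DFA `M`:
the set of words `w` with `M.evalFrom q w ∈ M.accept`. -/
def rightLang {Γ σ : Type*} (M : DFA Γ σ) (q : σ) : Language Γ :=
  {w | M.evalFrom q w ∈ M.accept}

lemma rightLang_evalFrom {Γ σ : Type*} (M : DFA Γ σ) (q : σ) (v : List Γ) :
    rightLang M (M.evalFrom q v) = {w | v ++ w ∈ rightLang M q} := by
  ext w
  show M.evalFrom (M.evalFrom q v) w ∈ M.accept ↔ M.evalFrom q (v ++ w) ∈ M.accept
  rw [DFA.evalFrom_of_append]

theorem unsafe_pair_transfers {Γ σ σ' : Type*} (M : DFA Γ σ) (M' : DFA Γ σ')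
    (hlang : M.accepts = M'.accepts)
    (hreach : ∀ q' : σ', ∃ w : List Γ, q' = M'.evalFrom M'.start w)
    (hmin : ∀ s1 s2 : σ', rightLang M' s1 = rightLang M' s2 → s1 = s2)
    (q1' q2' : σ') (W1 W2 : Set (List Γ))
    (h1 : ∃ w ∈ W1, M'.evalFrom q1' w = q2')
    (h2 : ∀ w' ∈ W2, M'.evalFrom q1' w' ≠ q2') :
    ∃ q1 q2 : σ,
      rightLang M q1 = rightLang M' q1' ∧
      rightLang M q2 = rightLang M' q2' ∧
      (∃ w ∈ W1, M.evalFrom q1 w = q2) ∧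
      (∀ w' ∈ W2, M.evalFrom q1 w' ≠ q2) := by
  obtain ⟨u, hu⟩ := hreach q1'
  obtain ⟨w, hwW1, hw⟩ := h1
  have hstart : rightLang M M.start = rightLang M' M'.start := by
    ext x
    have : x ∈ M.accepts ↔ x ∈ M'.accepts := by rw [hlang]
    exact (by simpa [rightLang, DFA.mem_accepts, DFA.eval] using this :
      M.evalFrom M.start x ∈ M.accept ↔ M'.evalFrom M'.start x ∈ M'.accept)
  set q1 := M.evalFrom M.start u with hq1
  have hkey : ∀ v : List Γ,
      rightLang M (M.evalFrom q1 v) = rightLang M' (M'.evalFrom q1' v) := by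
    intro v
    rw [hq1, hu, ← DFA.evalFrom_of_append, ← DFA.evalFrom_of_append,
      rightLang_evalFrom, rightLang_evalFrom, hstart]
  refine ⟨q1, M.evalFrom q1 w, ?_, ?_, ⟨w, hwW1, rfl⟩, ?_⟩
  · simpa using hkey []
  · rw [hkey w, hw]
  · intro w' hw' heq
    apply h2 w' hw'
    apply hmin
    rw [← hkey w', heq, hkey w, hw]
end

section
/- Correctness of the index-plus-reachability decomposition for queries of the form (_)* a1 (_)* a2 (_)* … (_)* ak (_)*: for an edge-labeled directed graph (V, E) over Γ, letters a1, …, ak ∈ Γ, and vertices u, v, there exists a word w and a w-labeled path from u to v such that the list [a1, …, ak] is a sublist (i.e., a not necessarily contiguous subsequence) of w, if and only if there exist vertices u_1, v_1, …, u_k, v_k such that E u_i a_i v_i for each i, u reaches u_1, v_i reaches u_{i+1} for each i < k, and v_k reaches v. -/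
/-- `u` reaches `v` in the edge-labeled directed graph `E`. -/
def Reaches {V Γ : Type*} (E : V → Γ → V → Prop) : V → V → Prop :=
  Relation.ReflTransGen (fun x y => ∃ a : Γ, E x a y)

theorem LabeledPath.trans' {V Γ : Type*} {E : V → Γ → V → Prop} {u x v : V} {w1 w2 : List Γ}
    (p : LabeledPath E u w1 x) (q : LabeledPath E x w2 v) : LabeledPath E u (w1 ++ w2) v := by
  induction p with
  | nil => exact q
  | cons h _ ih => exact .cons h (ih q)

theorem reaches_iff_path {V Γ : Type*} (E : V → Γ → V → Prop) (u v : V) :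
    Reaches E u v ↔ ∃ w, LabeledPath E u w v := by
  constructor
  · intro h
    induction h with
    | refl => exact ⟨[], .nil u⟩
    | tail _ h ih =>
      obtain ⟨w, p⟩ := ih
      obtain ⟨a, e⟩ := h
      exact ⟨w ++ [a], p.trans' (.cons e (.nil _))⟩
  · rintro ⟨w, p⟩
    induction p with
    | nil => exact .refl
    | cons h _ ih => exact .head ⟨_, h⟩ ih

theorem split_path {V Γ : Type*} {E : V → Γ → V → Prop} {u v : V} {w : List Γ}
    (p : LabeledPath E u w v) {a : Γ} {as : List Γ} (h : (a :: as).Sublist w) :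
    ∃ x y w2, Reaches E u x ∧ E x a y ∧ LabeledPath E y w2 v ∧ as.Sublist w2 := by
  induction p with
  | nil u => simp at h
  | cons e p ih =>
    cases h with
    | cons _ h' =>
      obtain ⟨x, y, w2, hr, he, hp, hs⟩ := ih h'
      exact ⟨x, y, w2, .head ⟨_, e⟩ hr, he, hp, hs⟩
    | cons_cons _ h' => exact ⟨_, _, _, .refl, e, p, h'⟩

theorem ifq_fwd {V Γ : Type*} (E : V → Γ → V → Prop) :
    ∀ (as : List Γ) (u v : V) (w : List Γ), LabeledPath E u w v → as.Sublist w →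
    ∃ uu vv : ℕ → V,
        (∀ (i : ℕ) (h : i < as.length), E (uu i) as[i] (vv i)) ∧
        (∀ i ≤ as.length,
          Reaches E (if i = 0 then u else vv (i - 1))
            (if i = as.length then v else uu i)) := by
  intro as
  induction as with
  | nil =>
    intro u v w p _
    refine ⟨fun _ => u, fun _ => u, by simp, ?_⟩
    intro i hi
    simp only [List.length_nil, Nat.le_zero] at hi
    subst hi
    simpa using (reaches_iff_path E u v).2 ⟨w, p⟩
  | cons a as ih =>
    intro u v w p hs
    obtain ⟨x, y, w2, hr, he, hp, hs2⟩ := split_path p hs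
    obtain ⟨uu, vv, h1, h2⟩ := ih y v w2 hp hs2
    refine ⟨fun i => if i = 0 then x else uu (i - 1),
            fun i => if i = 0 then y else vv (i - 1), ?_, ?_⟩
    · intro i hi
      cases i with
      | zero => simpa using he
      | succ n => simpa using h1 n (by simpa using hi)
    · intro i hi
      cases i with
      | zero => simpa using hr
      | succ n =>
        have := h2 n (by simpa using hi)
        simpa using this

theorem ifq_bwd {V Γ : Type*} (E : V → Γ → V → Prop) :
    ∀ (as : List Γ) (u v : V) (uu vv : ℕ → V),
      (∀ (i : ℕ) (h : i < as.length), E (uu i) as[i] (vv i)) →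
      (∀ i ≤ as.length,
        Reaches E (if i = 0 then u else vv (i - 1))
          (if i = as.length then v else uu i)) →
      ∃ w, LabeledPath E u w v ∧ as.Sublist w := by
  intro as
  induction as with
  | nil =>
    intro u v uu vv _ h2
    have := h2 0 (by simp)
    simp at this
    obtain ⟨w, p⟩ := (reaches_iff_path E u v).1 this
    exact ⟨w, p, by simp⟩
  | cons a as ih =>
    intro u v uu vv h1 h2
    have hru := h2 0 (by simp)
    simp at hru
    have he := h1 0 (by simp)
    obtain ⟨w', hp', hs'⟩ := ih (vv 0) v (fun i => uu (i + 1)) (fun i => vv (i + 1))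
      (fun i hi => by exact h1 (i + 1) (by simpa using hi))
      (fun i hi => by
        cases i with
        | zero => simpa [show (1 = as.length + 1) ↔ (0 = as.length) by omega, show (0 = as.length) ↔ as = [] by cases as <;> simp] using h2 1 (by simp)
        | succ n => simpa using h2 (n + 2) (by simpa using hi))
    obtain ⟨w0, p0⟩ := (reaches_iff_path E u (uu 0)).1 hru
    exact ⟨w0 ++ a :: w', p0.trans' (.cons he hp'),
      ((hs'.cons₂ a)).trans (List.sublist_append_right _ _)⟩

/-- Correctness of the index-plus-reachability decomposition for queries of the
form `(_)* a₁ (_)* a₂ (_)* … (_)* aₖ (_)*`, whose language is the set of words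
having `[a₁, …, aₖ]` as a (not necessarily contiguous) sublist.  The chain
condition: `u` reaches `u₁`, `E uᵢ aᵢ vᵢ`, `vᵢ` reaches `u_{i+1}`, and `vₖ`
reaches `v` (for `k = 0` it degenerates to `u` reaches `v`). -/
theorem ifq_decomposition {V Γ : Type*} (E : V → Γ → V → Prop)
    (as : List Γ) (u v : V) :
    (∃ w : List Γ, LabeledPath E u w v ∧ as.Sublist w) ↔
      ∃ uu vv : ℕ → V,
        (∀ (i : ℕ) (h : i < as.length), E (uu i) as[i] (vv i)) ∧
        (∀ i ≤ as.length,
          Reaches E (if i = 0 then u else vv (i - 1))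
            (if i = as.length then v else uu i)) := by
  constructor
  · rintro ⟨w, p, hs⟩
    exact ifq_fwd E as u v w p hs
  · rintro ⟨uu, vv, h1, h2⟩
    exact ifq_bwd E as u v uu vv h1 h2
end
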